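/- arXiv:1003.3379 — 5 statements merged into one kernel-verified Lean document; each statement's English description precedes it below -/
import Mathlib

section
/- Let A and B be Banach algebras, let T : A → B be a bounded linear bijective map, and define the bounded bilinear map m : A × B → B by m(a,b) = T(a)b (product taken in B). Then B is left strongly Arens irregular if and only if m is left strongly Arens irregular. -/
open Filter Topology ContinuousLinearMap NormedSpace

noncomputable section

/-- The topological dual of a seminormed space `E` (Mathlib's former `NormedSpace.Dual`, since
renamed `StrongDual`; restored here with its old definition). -/
abbrev NormedSpace.Dual (𝕜 : Type*) [NontriviallyNormedField 𝕜]
    (E : Type*) [SeminormedAddCommGroup E] [NormedSpace 𝕜 E] : Type _ := E →L[𝕜] 𝕜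

variable {X Y Z W E F : Type*}
  [NormedAddCommGroup X] [NormedSpace ℂ X]
  [NormedAddCommGroup Y] [NormedSpace ℂ Y]
  [NormedAddCommGroup Z] [NormedSpace ℂ Z]
  [NormedAddCommGroup E] [NormedSpace ℂ E]
  [NormedAddCommGroup F] [NormedSpace ℂ F]

/-- The (first) Arens adjoint `m* : Z* × X → Y*` of a bounded bilinear map
`m : X × Y → Z`, characterized by `⟨m*(z',x), y⟩ = ⟨z', m(x,y)⟩`. -/
noncomputable def arensAdj (m : X →L[ℂ] Y →L[ℂ] Z) :
    Dual ℂ Z →L[ℂ] X →L[ℂ] Dual ℂ Y :=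
  ((ContinuousLinearMap.compL ℂ Y Z ℂ).flip.comp m).flip

/-- The Arens triple adjoint `m*** : X** × Y** → Z**`. -/
noncomputable def arensExt (m : X →L[ℂ] Y →L[ℂ] Z) :
    Dual ℂ (Dual ℂ X) →L[ℂ] Dual ℂ (Dual ℂ Y) →L[ℂ] Dual ℂ (Dual ℂ Z) :=
  arensAdj (arensAdj (arensAdj m))

/-- A map between dual spaces is weak*-weak* continuous. -/
def IsWeakStarCont (f : Dual ℂ E → Dual ℂ F) : Prop :=
  Continuous fun x : WeakDual ℂ E =>
    StrongDual.toWeakDual (f (WeakDual.toStrongDual x))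

/-- First topological center of a bounded bilinear map. -/
def arensZ1 (m : X →L[ℂ] Y →L[ℂ] Z) : Set (Dual ℂ (Dual ℂ X)) :=
  {x'' | IsWeakStarCont fun y'' => arensExt m x'' y''}

/-- Second topological center of a bounded bilinear map. -/
def arensZ2 (m : X →L[ℂ] Y →L[ℂ] Z) : Set (Dual ℂ (Dual ℂ Y)) :=
  {y'' | IsWeakStarCont fun x'' => arensExt m.flip y'' x''}

/-- `m` is Arens regular when `m*** = m^{t***t}`. -/
def ArensRegular (m : X →L[ℂ] Y →L[ℂ] Z) : Prop :=
  arensExt m = (arensExt m.flip).flip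

/-- `m` is left strongly Arens irregular when `Z₁(m)` is the canonical image of `X`. -/
def LeftStronglyArensIrregular (m : X →L[ℂ] Y →L[ℂ] Z) : Prop :=
  arensZ1 m = Set.range (NormedSpace.inclusionInDoubleDual ℂ X)

/-- `m` is right strongly Arens irregular when `Z₂(m)` is the canonical image of `Y`. -/
def RightStronglyArensIrregular (m : X →L[ℂ] Y →L[ℂ] Z) : Prop :=
  arensZ2 m = Set.range (NormedSpace.inclusionInDoubleDual ℂ Y)

/-- The adjoint `T* : F* → E*` of a bounded linear map. -/
noncomputable def dualMap' (T : E →L[ℂ] F) : Dual ℂ F →L[ℂ] Dual ℂ E :=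
  (ContinuousLinearMap.compL ℂ E F ℂ).flip T

/-- The second adjoint `T** : E** → F**` of a bounded linear map. -/
noncomputable def bidualMap (T : E →L[ℂ] F) :
    Dual ℂ (Dual ℂ E) →L[ℂ] Dual ℂ (Dual ℂ F) :=
  dualMap' (dualMap' T)

/-- A net in `A`: a function from a nonempty directed preorder to `A`. -/
structure Net (A : Type*) where
  ι : Type
  [pre : Preorder ι]
  [dir : IsDirected ι (· ≤ ·)]
  [ne : Nonempty ι]
  e : ι → A

attribute [instance] Net.pre Net.dir Net.ne

/-- A bounded approximate identity for a (non-unital) Banach algebra. -/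
def IsBAI {A : Type*} [NonUnitalNormedRing A] (N : Net A) : Prop :=
  (∃ C : ℝ, ∀ i, ‖N.e i‖ ≤ C) ∧
  (∀ a : A, Tendsto (fun i => N.e i * a) atTop (𝓝 a)) ∧
  (∀ a : A, Tendsto (fun i => a * N.e i) atTop (𝓝 a))

end

section Aux
variable {X Y Z E F : Type*}
  [NormedAddCommGroup X] [NormedSpace ℂ X]
  [NormedAddCommGroup Y] [NormedSpace ℂ Y]
  [NormedAddCommGroup Z] [NormedSpace ℂ Z]
  [NormedAddCommGroup E] [NormedSpace ℂ E]
  [NormedAddCommGroup F] [NormedSpace ℂ F]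

theorem arensExt_comp' (m : X →L[ℂ] Y →L[ℂ] Z) (T : E →L[ℂ] X) (x'' : Dual ℂ (Dual ℂ E)) :
    arensExt (m.comp T) x'' = arensExt m (bidualMap T x'') := by
  ext y'' z'
  have h : arensAdj (arensAdj (m.comp T)) y'' z'
      = dualMap' T (arensAdj (arensAdj m) y'' z') := by ext x; rfl
  show x'' (arensAdj (arensAdj (m.comp T)) y'' z')
      = x'' (dualMap' T (arensAdj (arensAdj m) y'' z'))
  rw [h]

theorem bidualMap_incl' (T : E →L[ℂ] F) (a : E) :
    bidualMap T (inclusionInDoubleDual ℂ E a) = inclusionInDoubleDual ℂ F (T a) := by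
  ext f; rfl

theorem mem_arensZ1_comp (m : X →L[ℂ] Y →L[ℂ] Z) (T : E →L[ℂ] X)
    (x'' : Dual ℂ (Dual ℂ E)) :
    x'' ∈ arensZ1 (m.comp T) ↔ bidualMap T x'' ∈ arensZ1 m := by
  simp only [arensZ1, Set.mem_setOf_eq, arensExt_comp']

end Aux

/-- For bijective `T`, `B` is left strongly Arens irregular iff
`m(a,b) = T(a)b` is. -/



theorem stmt_3 {A B : Type*} [NonUnitalNormedRing A] [NormedSpace ℂ A] [IsScalarTower ℂ A A] [SMulCommClass ℂ A A] [CompleteSpace A] [NonUnitalNormedRing B] [NormedSpace ℂ B] [IsScalarTower ℂ B B] [SMulCommClass ℂ B B] [CompleteSpace B]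
    (T : A →L[ℂ] B) (hT : Function.Bijective T) :
    LeftStronglyArensIrregular (ContinuousLinearMap.mul ℂ B) ↔
      LeftStronglyArensIrregular ((ContinuousLinearMap.mul ℂ B).comp T) := by
  set m := ContinuousLinearMap.mul ℂ B with hm
  -- inverse of T
  let e : A ≃L[ℂ] B := ContinuousLinearEquiv.ofBijective T
    (LinearMap.ker_eq_bot.mpr hT.injective)
    (LinearMap.range_eq_top.mpr hT.surjective)
  have he : ∀ x, e x = T x := fun x =>
    congrFun (ContinuousLinearEquiv.coeFn_ofBijective T _ _) x
  set S : B →L[ℂ] A := (e.symm : B →L[ℂ] A) with hS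
  have hTS : ∀ b, T (S b) = b := fun b => by
    rw [← he]; exact e.apply_symm_apply b
  have hST : ∀ a, S (T a) = a := fun a => by
    show e.symm (T a) = a
    rw [← he]; exact e.symm_apply_apply a
  have hbTS : ∀ y'', bidualMap T (bidualMap S y'') = y'' := by
    intro y''; ext f
    show y'' (dualMap' S (dualMap' T f)) = y'' f
    congr 1; ext b; show f (T (S b)) = f b; rw [hTS]
  have hbST : ∀ x'', bidualMap S (bidualMap T x'') = x'' := by
    intro x''; ext f
    show x'' (dualMap' T (dualMap' S f)) = x'' f
    congr 1; ext a; show f (S (T a)) = f a; rw [hST]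
  constructor
  · intro h
    unfold LeftStronglyArensIrregular at h ⊢
    ext x''
    rw [mem_arensZ1_comp, h]
    constructor
    · rintro ⟨b, hb⟩
      obtain ⟨a, rfl⟩ := hT.surjective b
      refine ⟨a, ?_⟩
      have : bidualMap S (bidualMap T x'') = bidualMap S (inclusionInDoubleDual ℂ B (T a)) := by
        rw [hb]
      rw [hbST, ← bidualMap_incl', hbST] at this
      exact this.symm
    · rintro ⟨a, rfl⟩
      exact ⟨T a, (bidualMap_incl' T a).symm⟩
  · intro h
    unfold LeftStronglyArensIrregular at h ⊢
    ext y''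
    constructor
    · intro hy
      have hx : bidualMap S y'' ∈ arensZ1 (m.comp T) := by
        rw [mem_arensZ1_comp, hbTS]; exact hy
      rw [h] at hx
      obtain ⟨a, ha⟩ := hx
      refine ⟨T a, ?_⟩
      rw [← bidualMap_incl', ha, hbTS]
    · rintro ⟨b, rfl⟩
      obtain ⟨a, rfl⟩ := hT.surjective b
      have : inclusionInDoubleDual ℂ A a ∈ arensZ1 (m.comp T) := by
        rw [h]; exact ⟨a, rfl⟩
      rw [mem_arensZ1_comp, bidualMap_incl'] at this
      exact this
end

section
/- Let A be a Banach algebra, B a right Banach A-module with action π_r : B × A → B, T : A → B a bounded linear map, and define the bounded bilinear map m : A × A → B by m(a₁,a₂) = π_r(T(a₁), a₂). Then T**(Z₁(m)) ⊆ Z_{A**}(B**), where T** : A** → B** is the second adjoint of T and Z_{A**}(B**) = {b'' ∈ B** : a'' ↦ π_r***(b'', a'') is weak*-weak* continuous from A** to B**}. -/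
open Filter Topology ContinuousLinearMap NormedSpace

theorem arensExt_comp_eq {X Y Z W : Type*}
  [NormedAddCommGroup X] [NormedSpace ℂ X]
  [NormedAddCommGroup Y] [NormedSpace ℂ Y]
  [NormedAddCommGroup Z] [NormedSpace ℂ Z]
  [NormedAddCommGroup W] [NormedSpace ℂ W]
  (m : X →L[ℂ] Y →L[ℂ] Z) (T : W →L[ℂ] X) (x'' : Dual ℂ (Dual ℂ W))
  (y'' : Dual ℂ (Dual ℂ Y)) :
    arensExt (m.comp T) x'' y'' = arensExt m (bidualMap T x'') y'' := by
  ext z'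
  rfl

/-- For `m(a₁,a₂) = π_r(T(a₁),a₂)` one has `T**(Z₁(m)) ⊆ Z_{A**}(B**)`. -/
theorem stmt_6 {A B : Type*} [NonUnitalNormedRing A] [NormedSpace ℂ A] [IsScalarTower ℂ A A] [SMulCommClass ℂ A A] [CompleteSpace A] [NormedAddCommGroup B] [NormedSpace ℂ B] [CompleteSpace B]
    (πr : B →L[ℂ] A →L[ℂ] B)
    (hmod : ∀ (b : B) (a₁ a₂ : A), πr (πr b a₁) a₂ = πr b (a₁ * a₂))
    (T : A →L[ℂ] B) :
    bidualMap T '' arensZ1 (πr.comp T) ⊆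
      {b'' : Dual ℂ (Dual ℂ B) | IsWeakStarCont fun a'' => arensExt πr b'' a''} := by
  rintro _ ⟨a'', ha, rfl⟩
  have h : (fun y'' => arensExt πr (bidualMap T a'') y'')
      = fun y'' => arensExt (πr.comp T) a'' y'' := by
    ext y'' : 1
    exact (arensExt_comp_eq πr T a'' y'').symm
  simpa [Set.mem_setOf_eq, IsWeakStarCont, arensZ1, h] using ha
end

section
/- Let A be a Banach algebra and B a right Banach A-module with action π_r : B × A → B. Let T : A → B be a bounded linear map which is an extended left multiplier, i.e. T(a₁a₂) = π_r(T(a₁), a₂) for all a₁, a₂ ∈ A. Then the second adjoint T** : A** → B** satisfies T**(a₁''a₂'') = π_r***(T**(a₁''), a₂'') for all a₁'', a₂'' ∈ A**, where a₁''a₂'' denotes the first Arens product on A**. -/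
open Filter Topology ContinuousLinearMap NormedSpace

/-- If `T(a₁a₂) = π_r(T(a₁),a₂)` then
`T**(a₁''a₂'') = π_r***(T**(a₁''),a₂'')` for all `a₁'', a₂'' ∈ A**`. -/
theorem stmt_7 {A B : Type*} [NonUnitalNormedRing A] [NormedSpace ℂ A] [IsScalarTower ℂ A A] [SMulCommClass ℂ A A] [CompleteSpace A] [NormedAddCommGroup B] [NormedSpace ℂ B] [CompleteSpace B]
    (πr : B →L[ℂ] A →L[ℂ] B)
    (hmod : ∀ (b : B) (a₁ a₂ : A), πr (πr b a₁) a₂ = πr b (a₁ * a₂))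
    (T : A →L[ℂ] B)
    (hT : ∀ a₁ a₂ : A, T (a₁ * a₂) = πr (T a₁) a₂) :
    ∀ a₁'' a₂'' : Dual ℂ (Dual ℂ A),
      bidualMap T (arensExt (ContinuousLinearMap.mul ℂ A) a₁'' a₂'') =
        arensExt πr (bidualMap T a₁'') a₂'' := by
  intro a₁'' a₂''
  ext z'
  simp only [bidualMap, dualMap', arensExt, arensAdj, ContinuousLinearMap.coe_comp',
    Function.comp_apply, ContinuousLinearMap.flip_apply, ContinuousLinearMap.compL_apply,
    ContinuousLinearMap.comp_apply]
  congr 1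
  ext a
  simp only [ContinuousLinearMap.coe_comp', Function.comp_apply,
    ContinuousLinearMap.flip_apply, ContinuousLinearMap.compL_apply,
    ContinuousLinearMap.comp_apply]
  congr 1
  ext a₂
  simp only [ContinuousLinearMap.coe_comp', Function.comp_apply,
    ContinuousLinearMap.flip_apply, ContinuousLinearMap.compL_apply,
    ContinuousLinearMap.comp_apply, ContinuousLinearMap.mul_apply']
  exact congrArg z' (hT a a₂)
end

section
/- Let A be a Banach algebra whose bidual A** has a mixed unit e'' which is the weak* limit of a bounded approximate identity (e_α) of A, and let B be a left Banach A-module with action π_ℓ : A × B → B. Then B* factors on the left with respect to A, i.e. B*A = B*, if and only if e'' is a left unit A**-module for B**, i.e. π_ℓ***(e'', b'') = b'' for every b'' ∈ B**. -/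
open Filter Topology ContinuousLinearMap NormedSpace

set_option linter.unusedSectionVars false
set_option maxHeartbeats 1000000

noncomputable section CohenAux

variable {A : Type*} [NonUnitalNormedRing A] [NormedSpace ℂ A]
  [IsScalarTower ℂ A A] [SMulCommClass ℂ A A]
variable {X : Type*} [NormedAddCommGroup X] [NormedSpace ℂ X]

/-- scalar part of an element of the L¹ unitization -/
def fst1 (u : WithLp 1 (Unitization ℂ A)) : ℂ := (WithLp.equiv 1 (Unitization ℂ A) u).fst

/-- algebra part of an element of the L¹ unitization -/
def snd1 (u : WithLp 1 (Unitization ℂ A)) : A := (WithLp.equiv 1 (Unitization ℂ A) u).snd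

/-- embedding of `A` into the L¹ unitization -/
def iota (a : A) : WithLp 1 (Unitization ℂ A) :=
  (WithLp.equiv 1 (Unitization ℂ A)).symm (a : Unitization ℂ A)

@[simp] lemma fst1_mul (u v : WithLp 1 (Unitization ℂ A)) : fst1 (u * v) = fst1 u * fst1 v := rfl
@[simp] lemma snd1_mul (u v : WithLp 1 (Unitization ℂ A)) :
    snd1 (u * v) = fst1 u • snd1 v + fst1 v • snd1 u + snd1 u * snd1 v := rfl
@[simp] lemma fst1_one : fst1 (1 : WithLp 1 (Unitization ℂ A)) = 1 := rfl
@[simp] lemma snd1_one : snd1 (1 : WithLp 1 (Unitization ℂ A)) = 0 := rfl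
@[simp] lemma fst1_add (u v : WithLp 1 (Unitization ℂ A)) : fst1 (u + v) = fst1 u + fst1 v := rfl
@[simp] lemma snd1_add (u v : WithLp 1 (Unitization ℂ A)) : snd1 (u + v) = snd1 u + snd1 v := rfl
@[simp] lemma fst1_sub (u v : WithLp 1 (Unitization ℂ A)) : fst1 (u - v) = fst1 u - fst1 v := rfl
@[simp] lemma snd1_sub (u v : WithLp 1 (Unitization ℂ A)) : snd1 (u - v) = snd1 u - snd1 v := rfl
@[simp] lemma fst1_neg (u : WithLp 1 (Unitization ℂ A)) : fst1 (-u) = -fst1 u := rfl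
@[simp] lemma snd1_neg (u : WithLp 1 (Unitization ℂ A)) : snd1 (-u) = -snd1 u := rfl
@[simp] lemma fst1_smul (c : ℂ) (u : WithLp 1 (Unitization ℂ A)) : fst1 (c • u) = c * fst1 u := rfl
@[simp] lemma snd1_smul (c : ℂ) (u : WithLp 1 (Unitization ℂ A)) : snd1 (c • u) = c • snd1 u := rfl
@[simp] lemma fst1_iota (a : A) : fst1 (iota a) = 0 := rfl
@[simp] lemma snd1_iota (a : A) : snd1 (iota a) = a := rfl

lemma norm1_def (u : WithLp 1 (Unitization ℂ A)) : ‖u‖ = ‖fst1 u‖ + ‖snd1 u‖ :=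
  WithLp.unitization_norm_def u

@[simp] lemma norm_iota (a : A) : ‖(iota a : WithLp 1 (Unitization ℂ A))‖ = ‖a‖ :=
  WithLp.unitization_norm_inr a

@[simp] lemma norm_one1 : ‖(1 : WithLp 1 (Unitization ℂ A))‖ = 1 := by
  rw [norm1_def]; simp

lemma norm_fst1_le (u : WithLp 1 (Unitization ℂ A)) : ‖fst1 u‖ ≤ ‖u‖ := by
  rw [norm1_def]; linarith [norm_nonneg (snd1 u)]

lemma norm_snd1_le (u : WithLp 1 (Unitization ℂ A)) : ‖snd1 u‖ ≤ ‖u‖ := by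
  rw [norm1_def]; nlinarith [norm_nonneg (fst1 u)]

lemma iota_mul (a b : A) : iota (a * b) = (iota a * iota b : WithLp 1 (Unitization ℂ A)) := by
  unfold iota; rw [Unitization.inr_mul]; rfl

lemma iota_sub (a b : A) : iota (a - b) = (iota a - iota b : WithLp 1 (Unitization ℂ A)) := by
  unfold iota; rw [Unitization.inr_sub]; rfl

lemma inl1_mul (r : ℂ) (v : WithLp 1 (Unitization ℂ A)) :
    ((WithLp.equiv 1 (Unitization ℂ A)).symm (Unitization.inl r)) * v = r • v := by
  apply (WithLp.equiv 1 (Unitization ℂ A)).injective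
  show (Unitization.inl r : Unitization ℂ A) * (WithLp.equiv 1 _ v) = r • (WithLp.equiv 1 _ v)
  rw [← Unitization.algebraMap_eq_inl, ← Algebra.smul_def]

lemma decomp1 (u : WithLp 1 (Unitization ℂ A)) :
    u = (WithLp.equiv 1 (Unitization ℂ A)).symm (Unitization.inl (fst1 u)) + iota (snd1 u) := by
  apply (WithLp.equiv 1 (Unitization ℂ A)).injective
  exact (Unitization.inl_fst_add_inr_snd_eq _).symm

lemma eq_iota_of_fst1_eq_zero (u : WithLp 1 (Unitization ℂ A)) (h : fst1 u = 0) :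
    u = iota (snd1 u) := by
  conv_lhs => rw [decomp1 u]
  rw [h, Unitization.inl_zero]
  exact zero_add _

/-- the module action of the unitization, as a continuous bilinear map. -/
def actL (ρ : X →L[ℂ] A →L[ℂ] X) : X →L[ℂ] WithLp 1 (Unitization ℂ A) →L[ℂ] X :=
  LinearMap.mkContinuous₂
    (LinearMap.mk₂ ℂ (fun x u => fst1 u • x + ρ x (snd1 u))
      (fun x y u => by simp [smul_add]; abel)
      (fun c x u => by simp [smul_comm c, smul_add])
      (fun x u v => by simp [add_smul, map_add]; abel)
      (fun c x u => by simp [smul_smul, smul_add, map_smul]))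
    (1 + ‖ρ‖)
    (fun x u => by
      simp only [LinearMap.mk₂_apply]
      calc ‖fst1 u • x + ρ x (snd1 u)‖ ≤ ‖fst1 u‖ * ‖x‖ + ‖ρ‖ * ‖x‖ * ‖snd1 u‖ := by
            refine (norm_add_le _ _).trans (add_le_add (by rw [norm_smul]) ?_)
            exact (ρ x).le_opNorm _ |>.trans (by gcongr; exact (ρ.le_opNorm x))
        _ ≤ ‖u‖ * ‖x‖ + ‖ρ‖ * ‖x‖ * ‖u‖ := by
            gcongr
            · exact norm_fst1_le u
            · exact norm_snd1_le u
        _ = (1 + ‖ρ‖) * ‖x‖ * ‖u‖ := by ring)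

@[simp] lemma actL_apply (ρ : X →L[ℂ] A →L[ℂ] X) (x : X) (u : WithLp 1 (Unitization ℂ A)) :
    actL ρ x u = fst1 u • x + ρ x (snd1 u) := rfl


variable {A : Type*} [NonUnitalNormedRing A] [NormedSpace ℂ A]
  [IsScalarTower ℂ A A] [SMulCommClass ℂ A A]
variable {X : Type*} [NormedAddCommGroup X] [NormedSpace ℂ X]

lemma actL_one (ρ : X →L[ℂ] A →L[ℂ] X) (x : X) : actL ρ x 1 = x := by simp

lemma actL_iota (ρ : X →L[ℂ] A →L[ℂ] X) (x : X) (a : A) : actL ρ x (iota a) = ρ x a := by simp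

lemma actL_mul (ρ : X →L[ℂ] A →L[ℂ] X) (hρ : ∀ (x : X) (a b : A), ρ (ρ x a) b = ρ x (a * b))
    (x : X) (u v : WithLp 1 (Unitization ℂ A)) :
    actL ρ x (u * v) = actL ρ (actL ρ x u) v := by
  simp only [actL_apply, fst1_mul, snd1_mul, map_add, map_smul, smul_add,
    ContinuousLinearMap.add_apply, ContinuousLinearMap.smul_apply, hρ]
  rw [mul_smul]
  abel

lemma actL_norm (ρ : X →L[ℂ] A →L[ℂ] X) (x : X) (u : WithLp 1 (Unitization ℂ A)) :
    ‖actL ρ x u‖ ≤ (1 + ‖ρ‖) * ‖x‖ * ‖u‖ := by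
  rw [actL_apply]
  calc ‖fst1 u • x + ρ x (snd1 u)‖ ≤ ‖fst1 u‖ * ‖x‖ + ‖ρ‖ * ‖x‖ * ‖snd1 u‖ := by
        refine (norm_add_le _ _).trans (add_le_add (by rw [norm_smul]) ?_)
        exact (ρ x).le_opNorm _ |>.trans (by gcongr; exact (ρ.le_opNorm x))
    _ ≤ ‖u‖ * ‖x‖ + ‖ρ‖ * ‖x‖ * ‖u‖ := by
        gcongr
        · exact norm_fst1_le u
        · exact norm_snd1_le u
    _ = (1 + ‖ρ‖) * ‖x‖ * ‖u‖ := by ring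

lemma tendsto_actL (ρ : X →L[ℂ] A →L[ℂ] X)
    {f : ℕ → X} {g : ℕ → WithLp 1 (Unitization ℂ A)} {y : X} {a : WithLp 1 (Unitization ℂ A)}
    (hf : Tendsto f atTop (𝓝 y)) (hg : Tendsto g atTop (𝓝 a)) :
    Tendsto (fun n => actL ρ (f n) (g n)) atTop (𝓝 (actL ρ y a)) :=
  ((actL ρ).continuous₂.tendsto (y, a)).comp (hf.prodMk_nhds hg)

/-- dependent choice for sequences -/
lemma depChoice {S : ℕ → Sort*} (s0 : S 0) (R : ∀ n, S n → S (n + 1) → Prop)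
    (h : ∀ n s, ∃ s', R n s s') :
    ∃ f : ∀ n, S n, f 0 = s0 ∧ ∀ n, R n (f n) (f (n + 1)) :=
  ⟨fun n => Nat.rec s0 (fun n s => (h n s).choose) n, rfl,
    fun n => (h n (Nat.rec s0 (fun n s => (h n s).choose) n)).choose_spec⟩

theorem cohen_factorization
    {A X : Type*} [NonUnitalNormedRing A] [NormedSpace ℂ A] [IsScalarTower ℂ A A]
    [SMulCommClass ℂ A A] [CompleteSpace A]
    [NormedAddCommGroup X] [NormedSpace ℂ X] [CompleteSpace X]
    (ρ : X →L[ℂ] A →L[ℂ] X) (hρ : ∀ (x : X) (a b : A), ρ (ρ x a) b = ρ x (a * b))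
    (N : Net A) (hN : IsBAI N) (x : X)
    (hx : Tendsto (fun i => ρ x (N.e i)) atTop (𝓝 x)) :
    ∃ (y : X) (a : A), x = ρ y a := by
  obtain ⟨C₀, hC₀⟩ := hN.1
  set C := max C₀ 1 with hC
  have hC1 : (1:ℝ) ≤ C := le_max_right _ _
  have hCe : ∀ i, ‖N.e i‖ ≤ C := fun i => (hC₀ i).trans (le_max_left _ _)
  set t : ℝ := 1 / (2 * (C + 1)) with htdef
  have ht0 : 0 < t := by positivity
  have htC : t * (C + 1) = 1 / 2 := by
    rw [htdef]; field_simp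
  have ht4 : t ≤ 1 / 4 := by
    rw [htdef]
    rw [div_le_div_iff₀ (by positivity) (by norm_num)]
    linarith
  have ht1 : t < 1 := lt_of_le_of_lt ht4 (by norm_num)
  have h1t0 : 0 < 1 - t := by linarith
  have h1t1 : 1 - t ≤ 1 := by linarith
  set K : ℝ := 1 + ‖ρ‖ with hK
  have hK1 : (1:ℝ) ≤ K := by have := ρ.opNorm_nonneg; simp only [hK]; linarith
  have hK0 : (0:ℝ) < K := lt_of_lt_of_le one_pos hK1
  -- every element of the orbit of x is "essential"
  have hess : ∀ u : WithLp 1 (Unitization ℂ A),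
      Tendsto (fun i => ρ (actL ρ x u) (N.e i)) atTop (𝓝 (actL ρ x u)) := by
    intro u
    have heq : (fun i => ρ (actL ρ x u) (N.e i)) =
        fun i => fst1 u • ρ x (N.e i) + ρ x (snd1 u * N.e i) := by
      funext i
      simp only [actL_apply, map_add, map_smul, ContinuousLinearMap.add_apply,
        ContinuousLinearMap.smul_apply, hρ]
    rw [heq, actL_apply]
    exact (hx.const_smul (fst1 u)).add (((ρ x).continuous.tendsto _).comp (hN.2.2 (snd1 u)))
  -- the key inductive step
  have key : ∀ (n : ℕ) (w : (WithLp 1 (Unitization ℂ A))ˣ),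
      fst1 (w : WithLp 1 (Unitization ℂ A)) = ((1 - t : ℝ) : ℂ) ^ n →
      ‖(↑(w⁻¹) : WithLp 1 (Unitization ℂ A))‖ ≤ 4 ^ n →
      ∃ w' : (WithLp 1 (Unitization ℂ A))ˣ,
        (fst1 (w' : WithLp 1 (Unitization ℂ A)) = ((1 - t : ℝ) : ℂ) ^ (n + 1) ∧
        ‖(↑(w'⁻¹) : WithLp 1 (Unitization ℂ A))‖ ≤ 4 ^ (n + 1)) ∧
        ‖(w' : WithLp 1 (Unitization ℂ A)) - (w : WithLp 1 (Unitization ℂ A))‖ ≤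
          (C + 1) * (t * (1 - t) ^ n) ∧
        ‖actL ρ x (↑(w'⁻¹) : WithLp 1 (Unitization ℂ A)) -
          actL ρ x (↑(w⁻¹) : WithLp 1 (Unitization ℂ A))‖ ≤ (1 / 2) ^ (n + 1) := by
    intro n w hfst hinv
    set y' : X := actL ρ x (↑(w⁻¹) : WithLp 1 (Unitization ℂ A)) with hy'def
    set c : A := snd1 (↑(w⁻¹) : WithLp 1 (Unitization ℂ A)) with hcdef
    have hmulfst : fst1 ((↑w * ↑(w⁻¹) : WithLp 1 (Unitization ℂ A))) = 1 := by
      rw [w.mul_inv]; exact fst1_one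
    rw [fst1_mul, hfst] at hmulfst
    have hfstinv : fst1 (↑(w⁻¹) : WithLp 1 (Unitization ℂ A)) = (((1 - t : ℝ) : ℂ) ^ n)⁻¹ :=
      eq_inv_of_mul_eq_one_right hmulfst
    have hnormfstinv : ‖fst1 (↑(w⁻¹) : WithLp 1 (Unitization ℂ A))‖ = ((1 - t) ^ n)⁻¹ := by
      rw [hfstinv, norm_inv, norm_pow, Complex.norm_real, Real.norm_eq_abs, abs_of_pos h1t0]
    have hc2 : Tendsto (fun i => c * N.e i) atTop (𝓝 c) := hN.2.2 c
    have hyess : Tendsto (fun i => ρ y' (N.e i)) atTop (𝓝 y') := hess _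
    set ε : ℝ := (1 / 2) ^ (n + 1) / (K * 4 ^ (n + 1)) with hεdef
    have hε0 : 0 < ε := by positivity
    obtain ⟨i, hce, hye⟩ : ∃ i, ‖c * N.e i - c‖ ≤ 1 ∧ ‖ρ y' (N.e i) - y'‖ ≤ ε := by
      have h1 : ∀ᶠ i in atTop, ‖c * N.e i - c‖ ≤ 1 := by
        filter_upwards [hc2 (Metric.closedBall_mem_nhds c one_pos)] with i hi
        simpa [Metric.mem_closedBall, dist_eq_norm] using hi
      have h2 : ∀ᶠ i in atTop, ‖ρ y' (N.e i) - y'‖ ≤ ε := by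
        filter_upwards [hyess (Metric.closedBall_mem_nhds y' hε0)] with i hi
        simpa [Metric.mem_closedBall, dist_eq_norm] using hi
      exact (h1.and h2).exists
    set s : ℝ := t * (1 - t) ^ n with hsdef
    have hs0 : 0 < s := by positivity
    have h1tn0 : (0:ℝ) < (1 - t) ^ n := by positivity
    have h1tn1 : (1 - t) ^ n ≤ 1 := pow_le_one₀ (le_of_lt h1t0) h1t1
    have hst : s ≤ t := by nlinarith
    have hs1 : s ≤ 1 := le_trans hst (by linarith)
    set d : WithLp 1 (Unitization ℂ A) := iota (N.e i) - 1 with hddef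
    have hdnorm : ‖d‖ ≤ C + 1 := by
      rw [hddef]
      refine (norm_sub_le _ _).trans ?_
      rw [norm_iota, norm_one1]
      linarith [hCe i]
    have hwd : ‖(↑(w⁻¹) : WithLp 1 (Unitization ℂ A)) * d‖ ≤ ((1 - t) ^ n)⁻¹ * (C + 1) + 1 := by
      conv_lhs => rw [decomp1 (↑(w⁻¹) : WithLp 1 (Unitization ℂ A))]
      rw [add_mul, inl1_mul]
      have hiotad : iota (snd1 (↑(w⁻¹) : WithLp 1 (Unitization ℂ A))) * d
          = iota (c * N.e i - c) := by
        rw [hddef, mul_sub, mul_one, ← hcdef, ← iota_mul, ← iota_sub]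
      rw [hiotad]
      refine (norm_add_le _ _).trans ?_
      rw [norm_smul, norm_iota, hnormfstinv]
      have h1 : ((1 - t) ^ n)⁻¹ * ‖d‖ ≤ ((1 - t) ^ n)⁻¹ * (C + 1) := by
        apply mul_le_mul_of_nonneg_left hdnorm (by positivity)
      linarith [hce]
    set g : WithLp 1 (Unitization ℂ A) :=
      ((s : ℝ) : ℂ) • ((↑(w⁻¹) : WithLp 1 (Unitization ℂ A)) * d) with hgdef
    have hg34 : ‖g‖ ≤ 3 / 4 := by
      rw [hgdef, norm_smul, Complex.norm_real, Real.norm_eq_abs, abs_of_pos hs0]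
      have h2 : s * ‖(↑(w⁻¹) : WithLp 1 (Unitization ℂ A)) * d‖
          ≤ s * (((1 - t) ^ n)⁻¹ * (C + 1) + 1) :=
        mul_le_mul_of_nonneg_left hwd (le_of_lt hs0)
      have h3 : s * (((1 - t) ^ n)⁻¹ * (C + 1) + 1) = t * (C + 1) + s := by
        rw [hsdef]; field_simp
      rw [h3] at h2
      rw [htC] at h2
      linarith
    have hg1 : ‖-g‖ < 1 := by rw [norm_neg]; linarith
    set v : (WithLp 1 (Unitization ℂ A))ˣ := Units.oneSub (-g) hg1 with hvdef
    have hvval : (↑v : WithLp 1 (Unitization ℂ A)) = 1 + g := by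
      rw [hvdef, Units.val_oneSub, sub_neg_eq_add]
    have hvinv : ‖(↑(v⁻¹) : WithLp 1 (Unitization ℂ A))‖ ≤ 4 := by
      have h := tsum_geometric_le_of_norm_lt_one (-g) hg1
      have heq : (↑(v⁻¹) : WithLp 1 (Unitization ℂ A)) = ∑' k : ℕ, (-g) ^ k := rfl
      rw [heq]
      have h4 : (1 - ‖-g‖)⁻¹ ≤ 4 := by
        rw [norm_neg]
        rw [show (4:ℝ) = ((1:ℝ)/4)⁻¹ by norm_num]
        exact inv_anti₀ (by norm_num) (by linarith)
      rw [norm_one1] at h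
      linarith
    have hwv : (↑(w * v) : WithLp 1 (Unitization ℂ A)) = ↑w + ((s : ℝ) : ℂ) • d := by
      rw [Units.val_mul, hvval, mul_add, mul_one, hgdef, mul_smul_comm,
        Units.mul_inv_cancel_left]
    have hbound2 : ‖(↑((w * v)⁻¹) : WithLp 1 (Unitization ℂ A))‖ ≤ 4 ^ (n + 1) := by
      rw [mul_inv_rev, Units.val_mul]
      calc ‖(↑(v⁻¹) : WithLp 1 (Unitization ℂ A)) * ↑(w⁻¹)‖
          ≤ ‖(↑(v⁻¹) : WithLp 1 (Unitization ℂ A))‖ * ‖(↑(w⁻¹) : WithLp 1 (Unitization ℂ A))‖ :=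
            norm_mul_le _ _
        _ ≤ 4 * 4 ^ n := by
            apply mul_le_mul hvinv hinv (norm_nonneg _) (by norm_num)
        _ = 4 ^ (n + 1) := by rw [pow_succ]; ring
    refine ⟨w * v, ⟨?_, hbound2⟩, ?_, ?_⟩
    · rw [hwv, fst1_add, fst1_smul, hfst, hddef, fst1_sub, fst1_iota, fst1_one]
      rw [hsdef]
      push_cast
      ring
    · rw [hwv, add_sub_cancel_left, norm_smul, Complex.norm_real, Real.norm_eq_abs,
        abs_of_pos hs0]
      calc s * ‖d‖ ≤ s * (C + 1) := mul_le_mul_of_nonneg_left hdnorm (le_of_lt hs0)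
        _ = (C + 1) * (t * (1 - t) ^ n) := by rw [hsdef]; ring
    · have hdiff : (↑((w * v)⁻¹) : WithLp 1 (Unitization ℂ A)) - ↑(w⁻¹)
          = -(((s : ℝ) : ℂ) • ((↑(w⁻¹) : WithLp 1 (Unitization ℂ A)) * d * ↑((w * v)⁻¹))) := by
        have key0 : (↑((w * v)⁻¹) : WithLp 1 (Unitization ℂ A)) - ↑(w⁻¹)
            = ↑(w⁻¹) * (((↑w : WithLp 1 (Unitization ℂ A)) - ↑(w * v)) * ↑((w * v)⁻¹)) := by
          rw [sub_mul, mul_sub, Units.inv_mul_cancel_left, (w * v).mul_inv, mul_one]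
        rw [key0, show (↑w : WithLp 1 (Unitization ℂ A)) - ↑(w * v) = -(((s : ℝ) : ℂ) • d) by
          rw [hwv]; abel]
        rw [neg_mul, mul_neg, smul_mul_assoc, mul_smul_comm, mul_assoc]
      calc ‖actL ρ x (↑((w * v)⁻¹) : WithLp 1 (Unitization ℂ A)) - actL ρ x ↑(w⁻¹)‖
          = ‖actL ρ x ((↑((w * v)⁻¹) : WithLp 1 (Unitization ℂ A)) - ↑(w⁻¹))‖ := by
            rw [map_sub]
        _ = s * ‖actL ρ x ((↑(w⁻¹) : WithLp 1 (Unitization ℂ A)) * d * ↑((w * v)⁻¹))‖ := by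
            rw [hdiff, map_neg, map_smul, norm_neg, norm_smul, Complex.norm_real,
              Real.norm_eq_abs, abs_of_pos hs0]
        _ = s * ‖actL ρ (actL ρ (actL ρ x ↑(w⁻¹)) d) (↑((w * v)⁻¹) : WithLp 1 (Unitization ℂ A))‖ := by
            rw [actL_mul ρ hρ, actL_mul ρ hρ]
        _ ≤ s * (K * ‖actL ρ y' d‖ * ‖(↑((w * v)⁻¹) : WithLp 1 (Unitization ℂ A))‖) := by
            apply mul_le_mul_of_nonneg_left _ (le_of_lt hs0)
            rw [hK, ← hy'def]
            exact actL_norm ρ _ _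
        _ ≤ s * (K * ε * 4 ^ (n + 1)) := by
            have h5 : ‖actL ρ y' d‖ ≤ ε := by
              have h6 : actL ρ y' d = ρ y' (N.e i) - y' := by
                rw [hddef, map_sub, actL_iota, actL_one]
              rw [h6]; exact hye
            have h7 : (0:ℝ) ≤ K * ‖actL ρ y' d‖ := by positivity
            apply mul_le_mul_of_nonneg_left _ (le_of_lt hs0)
            apply mul_le_mul (mul_le_mul_of_nonneg_left h5 (le_of_lt hK0)) hbound2
              (norm_nonneg _) (by positivity)
        _ ≤ (1 / 2) ^ (n + 1) := by
            have h8 : K * ε * 4 ^ (n + 1) = (1 / 2) ^ (n + 1) := by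
              rw [hεdef]; field_simp
            rw [h8]
            nlinarith [pow_nonneg (by norm_num : (0:ℝ) ≤ 1/2) (n+1)]

  -- build the chain
  obtain ⟨f, hf0, hfR⟩ := depChoice
    (S := fun n => {w : (WithLp 1 (Unitization ℂ A))ˣ //
      fst1 (w : WithLp 1 (Unitization ℂ A)) = ((1 - t : ℝ) : ℂ) ^ n ∧
      ‖(↑(w⁻¹) : WithLp 1 (Unitization ℂ A))‖ ≤ 4 ^ n})
    ⟨1, by simp, by simp⟩
    (R := fun n p p' =>
      ‖(p'.1 : WithLp 1 (Unitization ℂ A)) - (p.1 : WithLp 1 (Unitization ℂ A))‖ ≤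
        (C + 1) * (t * (1 - t) ^ n) ∧
      ‖actL ρ x (↑(p'.1⁻¹) : WithLp 1 (Unitization ℂ A)) -
        actL ρ x (↑(p.1⁻¹) : WithLp 1 (Unitization ℂ A))‖ ≤ (1 / 2) ^ (n + 1))
    (fun n p => by
      obtain ⟨w', h1, h3, h4⟩ := key n p.1 p.2.1 p.2.2
      exact ⟨⟨w', h1⟩, h3, h4⟩)
  set w : ℕ → (WithLp 1 (Unitization ℂ A))ˣ := fun n => (f n).1 with hw
  set yseq : ℕ → X := fun n => actL ρ x (↑((w n)⁻¹) : WithLp 1 (Unitization ℂ A)) with hyseq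
  -- Cauchy sequences and limits
  have hcw : CauchySeq (fun n => ((w n : WithLp 1 (Unitization ℂ A)))) := by
    apply cauchySeq_of_le_geometric (1 - t) ((C + 1) * t) (by linarith)
    intro n
    rw [dist_eq_norm, norm_sub_rev]
    calc ‖(w (n+1) : WithLp 1 (Unitization ℂ A)) - (w n : _)‖ ≤ (C + 1) * (t * (1 - t) ^ n) :=
          (hfR n).1
      _ = (C + 1) * t * (1 - t) ^ n := by ring
  have hcy : CauchySeq yseq := by
    apply cauchySeq_of_le_geometric (1 / 2) 1 (by norm_num)
    intro n
    rw [dist_eq_norm, norm_sub_rev]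
    calc ‖yseq (n+1) - yseq n‖ ≤ (1 / 2) ^ (n + 1) := (hfR n).2
      _ ≤ 1 * (1 / 2) ^ n := by
          rw [pow_succ, one_mul]
          nlinarith [pow_nonneg (by norm_num : (0:ℝ) ≤ 1/2) n]
  obtain ⟨a', ha'⟩ := cauchySeq_tendsto_of_complete hcw
  obtain ⟨y, hy⟩ := cauchySeq_tendsto_of_complete hcy
  -- the scalar part of a' vanishes
  have hfstw : ∀ n, fst1 ((w n : WithLp 1 (Unitization ℂ A))) = ((1 - t : ℝ) : ℂ) ^ n :=
    fun n => (f n).2.1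
  have hfsta' : fst1 a' = 0 := by
    have hlip : ∀ u v : WithLp 1 (Unitization ℂ A), ‖fst1 u - fst1 v‖ ≤ ‖u - v‖ := by
      intro u v
      rw [← fst1_sub]
      exact norm_fst1_le _
    have h1 : Tendsto (fun n => fst1 ((w n : WithLp 1 (Unitization ℂ A)))) atTop (𝓝 (fst1 a')) := by
      rw [tendsto_iff_norm_sub_tendsto_zero]
      apply squeeze_zero (fun n => norm_nonneg _) (fun n => hlip _ _)
      rw [← tendsto_iff_norm_sub_tendsto_zero]
      exact ha'
    have h2 : Tendsto (fun n => ((1 - t : ℝ) : ℂ) ^ n) atTop (𝓝 0) := by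
      apply tendsto_pow_atTop_nhds_zero_of_norm_lt_one
      rw [Complex.norm_real, Real.norm_eq_abs, abs_of_pos h1t0]
      linarith
    simp only [hfstw] at h1
    exact tendsto_nhds_unique h1 h2
  -- x is a fixed combination
  have hxn : ∀ n, actL ρ (yseq n) ((w n : WithLp 1 (Unitization ℂ A))) = x := by
    intro n
    have h := actL_mul ρ hρ x (↑((w n)⁻¹) : WithLp 1 (Unitization ℂ A)) (w n)
    rw [show ((↑((w n)⁻¹) : WithLp 1 (Unitization ℂ A)) * ↑(w n)) = 1 from (w n).inv_mul,
      actL_one] at h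
    exact h.symm
  have hlimit : Tendsto (fun n => actL ρ (yseq n) ((w n : WithLp 1 (Unitization ℂ A)))) atTop
      (𝓝 (actL ρ y a')) := by
    exact tendsto_actL ρ hy ha'
  have hxya : x = actL ρ y a' := by
    refine tendsto_nhds_unique ?_ hlimit
    simp only [hxn]
    exact tendsto_const_nhds
  refine ⟨y, snd1 a', ?_⟩
  rw [hxya, eq_iota_of_fst1_eq_zero a' hfsta', actL_iota, snd1_iota]

end CohenAux

/-- With `e''` a mixed unit of `A**` which is the weak* limit of a BAI,
`B*A = B*` iff `π_ℓ***(e'',b'') = b''` for all `b'' ∈ B**`. -/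
theorem stmt_14 {A B : Type*} [NonUnitalNormedRing A] [NormedSpace ℂ A] [IsScalarTower ℂ A A] [SMulCommClass ℂ A A] [CompleteSpace A] [NormedAddCommGroup B] [NormedSpace ℂ B] [CompleteSpace B]
    (πl : A →L[ℂ] B →L[ℂ] B)
    (hmod : ∀ (a₁ a₂ : A) (b : B), πl (a₁ * a₂) b = πl a₁ (πl a₂ b))
    (e'' : Dual ℂ (Dual ℂ A))
    (hmixr : ∀ a'' : Dual ℂ (Dual ℂ A), arensExt (ContinuousLinearMap.mul ℂ A) a'' e'' = a'')
    (hmixl : ∀ a'' : Dual ℂ (Dual ℂ A),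
      arensExt (ContinuousLinearMap.mul ℂ A).flip a'' e'' = a'')
    (N : Net A) (hN : IsBAI N)
    (hlim : ∀ a' : Dual ℂ A, Tendsto (fun i => a' (N.e i)) atTop (𝓝 (e'' a'))) :
    (∀ b' : Dual ℂ B, ∃ (x' : Dual ℂ B) (a : A), b' = arensAdj πl x' a) ↔
      (∀ b'' : Dual ℂ (Dual ℂ B), arensExt πl e'' b'' = b'') := by
  have hmodule : ∀ (x' : Dual ℂ B) (a₀ a : A),
      arensAdj πl (arensAdj πl x' a₀) a = arensAdj πl x' (a₀ * a) := by
    intro x' a₀ a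
    ext b
    show x' (πl a₀ (πl a b)) = x' (πl (a₀ * a) b)
    rw [hmod]
  constructor
  · -- factorization implies e'' is a left unit
    intro hfact b''
    ext b'
    obtain ⟨x', a₀, rfl⟩ := hfact b'
    show e'' (arensAdj (arensAdj πl) b'' (arensAdj πl x' a₀)) = b'' (arensAdj πl x' a₀)
    have h1 : Tendsto (fun i => (arensAdj (arensAdj πl) b'' (arensAdj πl x' a₀)) (N.e i)) atTop
        (𝓝 (e'' (arensAdj (arensAdj πl) b'' (arensAdj πl x' a₀)))) := hlim _
    have h2 : ∀ i : N.ι, (arensAdj (arensAdj πl) b'' (arensAdj πl x' a₀)) (N.e i)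
        = (arensAdj (arensAdj πl) b'' x') (a₀ * N.e i) := by
      intro i
      show b'' (arensAdj πl (arensAdj πl x' a₀) (N.e i)) = b'' (arensAdj πl x' (a₀ * N.e i))
      rw [hmodule]
    simp only [h2] at h1
    have h3 : Tendsto (fun i => (arensAdj (arensAdj πl) b'' x') (a₀ * N.e i)) atTop
        (𝓝 ((arensAdj (arensAdj πl) b'' x') a₀)) :=
      ((arensAdj (arensAdj πl) b'' x').continuous.tendsto _).comp (hN.2.2 a₀)
    exact tendsto_nhds_unique h1 h3
  · -- e'' a left unit implies factorization
    intro hunit b'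
    set ρ : Dual ℂ B →L[ℂ] A →L[ℂ] Dual ℂ B := arensAdj πl with hρdef
    have hρ : ∀ (x' : Dual ℂ B) (a b : A), ρ (ρ x' a) b = ρ x' (a * b) :=
      fun x' a b => hmodule x' a b
    have hweak : ∀ (z : Dual ℂ B) (Λ : Dual ℂ (Dual ℂ B)),
        Tendsto (fun i => Λ (ρ z (N.e i))) atTop (𝓝 (Λ z)) := by
      intro z Λ
      have h1 := hlim (arensAdj (arensAdj πl) Λ z)
      have h3 : e'' (arensAdj (arensAdj πl) Λ z) = Λ z := by
        calc e'' (arensAdj (arensAdj πl) Λ z) = arensExt πl e'' Λ z := rfl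
          _ = Λ z := by rw [hunit Λ]
      rw [h3] at h1
      exact h1
    set S : Submodule ℂ (Dual ℂ B) :=
      { carrier := {z | Tendsto (fun i => ρ z (N.e i)) atTop (𝓝 z)}
        add_mem' := by
          intro z w hz hw
          have heq : (fun i => ρ (z + w) (N.e i)) =
              fun i => ρ z (N.e i) + ρ w (N.e i) := by
            funext i
            simp
          show Tendsto (fun i => ρ (z + w) (N.e i)) atTop (𝓝 (z + w))
          rw [heq]
          exact Tendsto.add hz hw
        zero_mem' := by
          have heq : (fun i => ρ 0 (N.e i)) = fun _ : N.ι => (0 : Dual ℂ B) := by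
            funext i; simp
          show Tendsto (fun i => ρ 0 (N.e i)) atTop (𝓝 0)
          rw [heq]
          exact tendsto_const_nhds
        smul_mem' := by
          intro c z hz
          have heq : (fun i => ρ (c • z) (N.e i)) = fun i => c • ρ z (N.e i) := by
            funext i; simp
          show Tendsto (fun i => ρ (c • z) (N.e i)) atTop (𝓝 (c • z))
          rw [heq]
          exact Tendsto.const_smul hz c } with hSdef
    obtain ⟨C₀, hC₀⟩ := hN.1
    set C : ℝ := max C₀ 1 with hCdef
    have hC1 : (1:ℝ) ≤ C := le_max_right _ _
    have hCe : ∀ i, ‖N.e i‖ ≤ C := fun i => (hC₀ i).trans (le_max_left _ _)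
    have hSclosed : IsClosed (S : Set (Dual ℂ B)) := by
      apply isClosed_of_closure_subset
      intro z hz
      show Tendsto (fun i => ρ z (N.e i)) atTop (𝓝 z)
      rw [Metric.tendsto_nhds]
      intro ε hε
      have hKC : (0:ℝ) < ‖πl‖ * C + 1 := by positivity
      obtain ⟨zs, hzsS, hzs⟩ := Metric.mem_closure_iff.mp hz (ε / (2 * (‖πl‖ * C + 1)))
        (by positivity)
      have hzsS' : Tendsto (fun i => ρ zs (N.e i)) atTop (𝓝 zs) := hzsS
      have h4 : ∀ᶠ i in atTop, dist (ρ zs (N.e i)) zs < ε / 2 :=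
        (Metric.tendsto_nhds.mp hzsS') _ (by positivity)
      filter_upwards [h4] with i hi
      have hd1 : dist (ρ z (N.e i)) (ρ zs (N.e i)) ≤ ‖πl‖ * C * dist z zs := by
        rw [dist_eq_norm, dist_eq_norm]
        have heq2 : ρ z (N.e i) - ρ zs (N.e i) = ρ (z - zs) (N.e i) := by simp
        rw [heq2]
        calc ‖ρ (z - zs) (N.e i)‖ ≤ ‖πl‖ * ‖z - zs‖ * ‖N.e i‖ := by
              show ‖(z - zs).comp (πl (N.e i))‖ ≤ _
              calc _ ≤ ‖z - zs‖ * ‖πl (N.e i)‖ := ContinuousLinearMap.opNorm_comp_le _ _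
                _ ≤ ‖z - zs‖ * (‖πl‖ * ‖N.e i‖) := by gcongr; exact πl.le_opNorm _
                _ = _ := by ring
          _ ≤ ‖πl‖ * ‖z - zs‖ * C := by
              apply mul_le_mul_of_nonneg_left (hCe i) (by positivity)
          _ = ‖πl‖ * C * ‖z - zs‖ := by ring
      have hdzzs : dist z zs < ε / (2 * (‖πl‖ * C + 1)) := hzs
      calc dist (ρ z (N.e i)) z
          ≤ dist (ρ z (N.e i)) (ρ zs (N.e i)) + dist (ρ zs (N.e i)) zs + dist zs z :=
            dist_triangle4 _ _ _ _
        _ ≤ ‖πl‖ * C * dist z zs + ε / 2 + dist z zs := by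
            rw [dist_comm zs z]
            linarith [hd1, hi.le]
        _ = (‖πl‖ * C + 1) * dist z zs + ε / 2 := by ring
        _ < (‖πl‖ * C + 1) * (ε / (2 * (‖πl‖ * C + 1))) + ε / 2 := by
            have := mul_lt_mul_of_pos_left hdzzs hKC
            linarith
        _ = ε := by field_simp; ring
    have hbS : b' ∈ S := by
      by_contra hb
      haveI : IsClosed (S : Set (Dual ℂ B)) := hSclosed
      set mkC : Dual ℂ B →L[ℂ] ((Dual ℂ B) ⧸ S) :=
        LinearMap.mkContinuous (E := Dual ℂ B) (F := Dual ℂ B ⧸ S) (σ := RingHom.id ℂ) S.mkQ 1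
          (fun m => by
            rw [one_mul]
            exact Submodule.Quotient.norm_mk_le S m) with hmkC
      have hne : (Submodule.Quotient.mk b' : (Dual ℂ B) ⧸ S) ≠ 0 := by
        simpa [Submodule.Quotient.mk_eq_zero] using hb
      obtain ⟨g, hg1, hgx⟩ := exists_dual_vector ℂ (Submodule.Quotient.mk b' : (Dual ℂ B) ⧸ S) (by intro h; exact hne ((@norm_eq_zero (Dual ℂ B ⧸ S) (Submodule.Quotient.normedAddCommGroup S).toNormedAddGroup _).mp h))
      set Λ : Dual ℂ (Dual ℂ B) := g.comp mkC with hΛ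
      have hρS : ∀ i, ρ b' (N.e i) ∈ S := by
        intro i
        show Tendsto (fun j => ρ (ρ b' (N.e i)) (N.e j)) atTop (𝓝 (ρ b' (N.e i)))
        have heq : (fun j => ρ (ρ b' (N.e i)) (N.e j)) =
            fun j => ρ b' (N.e i * N.e j) := by
          funext j
          exact hρ _ _ _
        rw [heq]
        exact ((ρ b').continuous.tendsto _).comp (hN.2.2 (N.e i))
      have hzero : ∀ i, Λ (ρ b' (N.e i)) = 0 := by
        intro i
        show g (mkC (ρ b' (N.e i))) = 0
        have hmk0 : mkC (ρ b' (N.e i)) = 0 := by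
          show (Submodule.Quotient.mk (ρ b' (N.e i)) : (Dual ℂ B) ⧸ S) = 0
          rw [Submodule.Quotient.mk_eq_zero]
          exact hρS i
        rw [hmk0, map_zero]
      have h5 := hweak b' Λ
      simp only [hzero] at h5
      have h6 : Λ b' = 0 := tendsto_nhds_unique h5 tendsto_const_nhds
      have h7 : Λ b' = (‖(Submodule.Quotient.mk b' : (Dual ℂ B) ⧸ S)‖ : ℂ) := hgx
      rw [h6] at h7
      have h8 : ‖(Submodule.Quotient.mk b' : (Dual ℂ B) ⧸ S)‖ = 0 := by
        exact_mod_cast h7.symm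
      exact hne ((@norm_eq_zero (Dual ℂ B ⧸ S) (Submodule.Quotient.normedAddCommGroup S).toNormedAddGroup _).mp h8)
    obtain ⟨y, a, hya⟩ := cohen_factorization ρ hρ N hN b' hbS
    exact ⟨y, a, hya⟩
end

section
/- Let A be a Banach algebra whose bidual A** has a mixed unit e'' which is the weak* limit of a bounded approximate identity (e_α) of A, and let B be a right Banach A-module with action π_r : B × A → B such that Z_{e''}(π_r^t) = B**. Then B* factors on the right with respect to A, i.e. AB* = B*, if and only if e'' is a right unit A**-module for B**, i.e. π_r***(b'', e'') = b'' for every b'' ∈ B**. -/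
open Filter Topology ContinuousLinearMap NormedSpace

set_option maxHeartbeats 1000000 in
private lemma cohen_factorization_s15 {A M : Type*} [NonUnitalNormedRing A]
    [NormedSpace ℂ A] [CompleteSpace A]
    [NormedAddCommGroup M] [NormedSpace ℂ M] [CompleteSpace M]
    (ρ : A →L[ℂ] M →L[ℂ] M) (hmul : ∀ (a b : A) (w : M), ρ (a * b) w = ρ a (ρ b w))
    {ι : Type} [Preorder ι] [IsDirected ι (· ≤ ·)] [Nonempty ι]
    (e : ι → A) (C : ℝ) (hC : ∀ i, ‖e i‖ ≤ C)
    (hA : ∀ a : A, Tendsto (fun i => e i * a) atTop (𝓝 a))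
    (x : M) (hx : Tendsto (fun i => ρ (e i) x) atTop (𝓝 x)) :
    ∃ (a : A) (y : M), x = ρ a y := by
  classical
  haveI : NeBot (atTop : Filter ι) :=
    atTop_neBot_iff.mpr ⟨‹Nonempty ι›, ‹IsDirected ι (· ≤ ·)›⟩
  have hC0 : 0 ≤ C := le_trans (norm_nonneg _) (hC (Classical.arbitrary ι))
  set R : ℝ := ‖ρ‖ with hR
  have hR0 : 0 ≤ R := by rw [hR]; exact norm_nonneg ρ
  set t : ℝ := (2 * ((R + 1) * (C + 1) + 1))⁻¹ with htdef
  have hden : (0:ℝ) < 2 * ((R + 1) * (C + 1) + 1) := by positivity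
  have htpos : 0 < t := by positivity
  have ht1 : t ≤ 1/2 := by
    rw [htdef]
    rw [inv_le_comm₀ (by positivity) (by norm_num)]
    nlinarith
  have h1t : 0 < 1 - t := by linarith
  have h1t1 : 1 - t < 1 := by linarith
  -- key smallness bound
  have hkey : ∀ a : A, ‖a‖ ≤ C → ‖t • ((1 : M →L[ℂ] M) - ρ a)‖ ≤ 1/2 := by
    intro a ha
    rw [norm_smul t ((1 : M →L[ℂ] M) - ρ a), Real.norm_eq_abs, abs_of_pos htpos]
    have h1 : ‖(1 : M →L[ℂ] M) - ρ a‖ ≤ (R + 1) * (C + 1) := by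
      refine le_trans (norm_sub_le _ _) ?_
      have h2 : ‖(1 : M →L[ℂ] M)‖ ≤ 1 := norm_id_le
      have h3 : ‖ρ a‖ ≤ R * C := le_trans (ρ.le_opNorm a)
        (mul_le_mul_of_nonneg_left ha hR0)
      nlinarith
    have hinv := mul_inv_cancel₀ (ne_of_gt hden)
    calc t * ‖(1 : M →L[ℂ] M) - ρ a‖ ≤ t * ((R + 1) * (C + 1)) := by
          exact mul_le_mul_of_nonneg_left h1 htpos.le
      _ ≤ 1/2 := by rw [htdef]; rw [inv_mul_le_iff₀ hden]; nlinarith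
  -- selection of good BAI elements
  have hsel : ∀ (c : A) (ε : ℝ), 0 < ε →
      ∃ i, ‖e i * c - c‖ ≤ ε ∧ ‖ρ (e i) x - x‖ ≤ ε := by
    intro c ε hε
    have hball : ∀ z : A, ∀ᶠ y in 𝓝 z, ‖y - z‖ ≤ ε := by
      intro z
      filter_upwards [Metric.closedBall_mem_nhds z hε] with y hy
      simpa [dist_eq_norm] using hy
    have hballM : ∀ᶠ y in 𝓝 x, ‖y - x‖ ≤ ε := by
      filter_upwards [Metric.closedBall_mem_nhds x hε] with y hy
      simpa [dist_eq_norm] using hy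
    exact (((hA c).eventually (hball c)).and (hx.eventually hballM)).exists
  choose sel hsel1 hsel2 using fun (c : A) (n : ℕ) =>
    hsel c ((4:ℝ)⁻¹ ^ (n+1)) (by positivity)
  -- the recursive construction
  let c : ℕ → A := fun n => Nat.rec (0 : A)
    (fun n cn => cn + t • ((1-t)^n • e (sel cn n) + e (sel cn n) * cn - cn)) n
  let g : ℕ → A := fun n => e (sel (c n) n)
  have hcsucc : ∀ n, c (n+1) = c n + t • ((1-t)^n • g n + g n * c n - c n) := fun n => rfl
  have hc0 : c 0 = 0 := rfl
  have hg1 : ∀ n, ‖g n * c n - c n‖ ≤ (4:ℝ)⁻¹ ^ (n+1) := fun n => (hsel1 (c n) n)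
  have hg2 : ∀ n, ‖ρ (g n) x - x‖ ≤ (4:ℝ)⁻¹ ^ (n+1) := fun n => (hsel2 (c n) n)
  have hgC : ∀ n, ‖g n‖ ≤ C := fun n => hC _
  set z : ℕ → (M →L[ℂ] M) := fun n => t • ((1 : M →L[ℂ] M) - ρ (g n)) with hzdef
  have hz : ∀ n, ‖z n‖ ≤ 1/2 := fun n => hkey _ (hgC n)
  have hz1 : ∀ n, ‖z n‖ < 1 := fun n => lt_of_le_of_lt (hz n) (by norm_num)
  let G : ℕ → (M →L[ℂ] M)ˣ := fun n => Units.oneSub (z n) (hz1 n)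
  let P : ℕ → (M →L[ℂ] M)ˣ := fun n => Nat.rec 1 (fun n Pn => G n * Pn) n
  have hPsucc : ∀ n, P (n+1) = G n * P n := fun n => rfl
  let y : ℕ → M := fun n => (↑(P n)⁻¹ : M →L[ℂ] M) x
  -- norm bound on inverses
  have hGinv : ∀ n, ‖(↑(G n)⁻¹ : M →L[ℂ] M)‖ ≤ 2 := by
    intro n
    have hval : (↑(G n)⁻¹ : M →L[ℂ] M) = ∑' k : ℕ, (z n) ^ k := rfl
    rw [hval]
    have hsum : HasSum (fun k : ℕ => (1/2 : ℝ) ^ k) 2 := by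
      have := hasSum_geometric_of_lt_one (by norm_num : (0:ℝ) ≤ 1/2) (by norm_num)
      norm_num at this
      convert this using 2 <;> norm_num
    refine tsum_of_norm_bounded hsum ?_
    intro k
    match k with
    | 0 => simpa using (show ‖(1 : M →L[ℂ] M)‖ ≤ 1 from norm_id_le)
    | (k+1) =>
      calc ‖(z n) ^ (k+1)‖ ≤ ‖z n‖ ^ (k+1) := norm_pow_le' _ (Nat.succ_pos k)
        _ ≤ (1/2) ^ (k+1) := pow_le_pow_left₀ (norm_nonneg _) (hz n) _
  have hPinv : ∀ n, ‖(↑(P n)⁻¹ : M →L[ℂ] M)‖ ≤ 2 ^ n := by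
    intro n
    induction n with
    | zero =>
      show ‖(↑(1 : (M →L[ℂ] M)ˣ)⁻¹ : M →L[ℂ] M)‖ ≤ 1
      simpa using (show ‖(1 : M →L[ℂ] M)‖ ≤ 1 from norm_id_le)
    | succ n ih =>
      have h1 : (P (n+1))⁻¹ = (P n)⁻¹ * (G n)⁻¹ := by rw [hPsucc, mul_inv_rev]
      rw [h1, Units.val_mul]
      calc ‖(↑(P n)⁻¹ : M →L[ℂ] M) * ↑(G n)⁻¹‖ ≤ ‖(↑(P n)⁻¹ : M →L[ℂ] M)‖ * ‖(↑(G n)⁻¹ : M →L[ℂ] M)‖ :=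
            norm_mul_le _ _
        _ ≤ 2 ^ n * 2 := by
            exact mul_le_mul ih (hGinv n) (norm_nonneg _) (by positivity)
        _ = 2 ^ (n+1) := by ring
  -- y is Cauchy
  have hystep : ∀ n, ‖y (n+1) - y n‖ ≤ (t/2) * (1/2) ^ n := by
    intro n
    have h1 : y (n+1) = (↑(P n)⁻¹ : M →L[ℂ] M) ((↑(G n)⁻¹ : M →L[ℂ] M) x) := by
      show (↑(P (n+1))⁻¹ : M →L[ℂ] M) x = _
      rw [hPsucc, mul_inv_rev, Units.val_mul, ContinuousLinearMap.mul_apply]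
    have hGx : (↑(G n) : M →L[ℂ] M) x = x - t • (x - ρ (g n) x) := rfl
    have hx1 : (↑(G n)⁻¹ : M →L[ℂ] M) ((↑(G n) : M →L[ℂ] M) x) = x := by
      have h : ((↑(G n)⁻¹ : M →L[ℂ] M) * ↑(G n)) = 1 := (G n).inv_mul
      calc (↑(G n)⁻¹ : M →L[ℂ] M) ((↑(G n) : M →L[ℂ] M) x)
          = ((↑(G n)⁻¹ : M →L[ℂ] M) * ↑(G n)) x := rfl
        _ = (1 : M →L[ℂ] M) x := by rw [h]
        _ = x := rfl
    have h2 : (↑(G n)⁻¹ : M →L[ℂ] M) x - x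
        = (↑(G n)⁻¹ : M →L[ℂ] M) (t • (x - ρ (g n) x)) := by
      have hsub : x - (↑(G n) : M →L[ℂ] M) x = t • (x - ρ (g n) x) := by
        rw [hGx]; abel
      rw [← hsub, map_sub, hx1]
    have h3 : ‖(↑(G n)⁻¹ : M →L[ℂ] M) x - x‖ ≤ 2 * (t * (4:ℝ)⁻¹ ^ (n+1)) := by
      rw [h2]
      calc ‖(↑(G n)⁻¹ : M →L[ℂ] M) (t • (x - ρ (g n) x))‖
          ≤ ‖(↑(G n)⁻¹ : M →L[ℂ] M)‖ * ‖t • (x - ρ (g n) x)‖ := le_opNorm _ _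
        _ ≤ 2 * (t * (4:ℝ)⁻¹ ^ (n+1)) := by
            rw [norm_smul t (x - ρ (g n) x), Real.norm_eq_abs, abs_of_pos htpos]
            have h4 : ‖x - ρ (g n) x‖ ≤ (4:ℝ)⁻¹ ^ (n+1) := by
              rw [norm_sub_rev]; exact hg2 n
            exact mul_le_mul (hGinv n) (mul_le_mul_of_nonneg_left h4 htpos.le)
              (by positivity) (by norm_num)
    have h5 : y (n+1) - y n = (↑(P n)⁻¹ : M →L[ℂ] M) ((↑(G n)⁻¹ : M →L[ℂ] M) x - x) := by
      rw [h1, map_sub]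
    calc ‖y (n+1) - y n‖ ≤ ‖(↑(P n)⁻¹ : M →L[ℂ] M)‖ * ‖(↑(G n)⁻¹ : M →L[ℂ] M) x - x‖ := by
          rw [h5]; exact le_opNorm _ _
      _ ≤ 2 ^ n * (2 * (t * (4:ℝ)⁻¹ ^ (n+1))) := by
          exact mul_le_mul (hPinv n) h3 (norm_nonneg _) (by positivity)
      _ = (t/2) * (1/2) ^ n := by
          have h6 : ((4:ℝ)⁻¹) ^ (n+1) = (4:ℝ)⁻¹ * (4⁻¹) ^ n := by ring
          have h7 : (2:ℝ) ^ n * (4:ℝ)⁻¹ ^ n = (1/2) ^ n := by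
            rw [← mul_pow]; norm_num
          rw [h6]; nlinarith [h7]
  have hycauchy : CauchySeq y := by
    refine cauchySeq_of_le_geometric (1/2) (t/2) (by norm_num) (fun n => ?_)
    rw [dist_eq_norm, norm_sub_rev]
    exact hystep n
  obtain ⟨ylim, hylim⟩ := cauchySeq_tendsto_of_complete hycauchy
  -- c is Cauchy
  set r : ℝ := max (1 - t) (4:ℝ)⁻¹ with hrdef
  have hr1 : r < 1 := max_lt h1t1 (by norm_num)
  have hr0 : 0 ≤ r := le_trans (by norm_num) (le_max_right _ _)
  have hcstep : ∀ n, ‖c (n+1) - c n‖ ≤ (t * (C + 1)) * r ^ n := by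
    intro n
    rw [hcsucc, add_sub_cancel_left, norm_smul t ((1-t)^n • g n + g n * c n - c n), Real.norm_eq_abs, abs_of_pos htpos]
    have h1 : ‖(1-t)^n • g n + g n * c n - c n‖ ≤ (1-t)^n * C + (4:ℝ)⁻¹ ^ (n+1) := by
      rw [add_sub_assoc]
      calc ‖(1-t)^n • g n + (g n * c n - c n)‖
          ≤ ‖(1-t)^n • g n‖ + ‖g n * c n - c n‖ := norm_add_le _ _
        _ ≤ (1-t)^n * C + (4:ℝ)⁻¹ ^ (n+1) := by
            refine add_le_add ?_ (hg1 n)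
            rw [norm_smul ((1-t)^n) (g n), Real.norm_eq_abs, abs_of_pos (pow_pos h1t n)]
            exact mul_le_mul_of_nonneg_left (hgC n) (pow_pos h1t n).le
    have h2 : (1-t)^n ≤ r ^ n := pow_le_pow_left₀ h1t.le (le_max_left _ _) n
    have h3 : (4:ℝ)⁻¹ ^ (n+1) ≤ r ^ n := by
      calc (4:ℝ)⁻¹ ^ (n+1) ≤ (4:ℝ)⁻¹ ^ n :=
            pow_le_pow_of_le_one (by norm_num) (by norm_num) (Nat.le_succ n)
        _ ≤ r ^ n := pow_le_pow_left₀ (by norm_num) (le_max_right _ _) n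
    have h4 : ‖(1-t)^n • g n + g n * c n - c n‖ ≤ (C + 1) * r ^ n := by
      refine le_trans h1 ?_
      have := pow_nonneg hr0 n
      nlinarith
    calc t * ‖(1-t)^n • g n + g n * c n - c n‖ ≤ t * ((C + 1) * r ^ n) :=
          mul_le_mul_of_nonneg_left h4 htpos.le
      _ = (t * (C + 1)) * r ^ n := by ring
  have hccauchy : CauchySeq c := by
    refine cauchySeq_of_le_geometric r (t * (C+1)) hr1 (fun n => ?_)
    rw [dist_eq_norm, norm_sub_rev]
    exact hcstep n
  obtain ⟨a, ha⟩ := cauchySeq_tendsto_of_complete hccauchy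
  -- the algebraic identity  P n = (1-t)^n • 1 + ρ (c n)
  have hP : ∀ n, (Units.val (P n) : M →L[ℂ] M) = (1-t)^n • (1 : M →L[ℂ] M) + ρ (c n) := by
    intro n
    induction n with
    | zero => simp [hc0]; rfl
    | succ n ih =>
      have hval : (Units.val (P (n+1)) : M →L[ℂ] M) = ((1 : M →L[ℂ] M) - z n) * (Units.val (P n)) := by
        rw [hPsucc, Units.val_mul]; rfl
      ext w
      rw [hval, ih]
      have expand : ρ (c (n+1)) w = ρ (c n) w
          + t • ((1-t)^n • ρ (g n) w + ρ (g n * c n) w - ρ (c n) w) := by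
        rw [hcsucc]
        simp [map_add, map_sub, ContinuousLinearMap.map_smul_of_tower]
      simp only [ContinuousLinearMap.mul_apply, ContinuousLinearMap.sub_apply,
        ContinuousLinearMap.add_apply, ContinuousLinearMap.smul_apply,
        ContinuousLinearMap.one_apply, hzdef, expand, map_add,
        ContinuousLinearMap.map_smul_of_tower, hmul, pow_succ]
      module
  have hxn : ∀ n, x = (1-t)^n • y n + ρ (c n) (y n) := by
    intro n
    have h1 : (Units.val (P n) : M →L[ℂ] M) (y n) = x := by
      have h : (Units.val (P n) : M →L[ℂ] M) * (↑(P n)⁻¹ : M →L[ℂ] M) = 1 := (P n).mul_inv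
      calc (Units.val (P n) : M →L[ℂ] M) ((↑(P n)⁻¹ : M →L[ℂ] M) x)
          = ((Units.val (P n) : M →L[ℂ] M) * (↑(P n)⁻¹ : M →L[ℂ] M)) x := rfl
        _ = (1 : M →L[ℂ] M) x := by rw [h]
        _ = x := rfl
    rw [← h1, hP n]
    simp
  -- pass to the limit
  have l1 : Tendsto (fun n => (1-t)^n • y n) atTop (𝓝 (0 : M)) := by
    have h0 : Tendsto (fun n : ℕ => (1-t)^n) atTop (𝓝 (0:ℝ)) :=
      tendsto_pow_atTop_nhds_zero_of_lt_one h1t.le h1t1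
    simpa using h0.smul hylim
  have l2 : Tendsto (fun n => ρ (c n) (y n)) atTop (𝓝 (ρ a ylim)) := by
    have hcont : Continuous (Function.uncurry fun (p : A) (q : M) => ρ p q) := ρ.continuous₂
    exact (hcont.tendsto (a, ylim)).comp (ha.prodMk_nhds hylim)
  have l3 : Tendsto (fun n : ℕ => x) atTop (𝓝 ((0 : M) + ρ a ylim)) := by
    have := l1.add l2
    convert this using 2 with n
    exact hxn n
  refine ⟨a, ylim, ?_⟩
  have := tendsto_nhds_unique l3 (tendsto_const_nhds : Tendsto (fun _ : ℕ => x) atTop (𝓝 x))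
  rw [← this, zero_add]

private lemma arensAdj_apply_eq {X Y Z : Type*} [NormedAddCommGroup X] [NormedSpace ℂ X]
    [NormedAddCommGroup Y] [NormedSpace ℂ Y] [NormedAddCommGroup Z] [NormedSpace ℂ Z]
    (m : X →L[ℂ] Y →L[ℂ] Z) (z' : Dual ℂ Z) (x : X) (y : Y) :
    arensAdj m z' x y = z' (m x y) := rfl

set_option maxHeartbeats 4000000 in
/-- With `e''` a mixed unit of `A**` which is the weak* limit of a BAI,
and `Z_{e''}(π_r^t) = B**`, `AB* = B*` iff `π_r***(b'',e'') = b''` for all `b'' ∈ B**`. -/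
theorem stmt_15 {A B : Type*} [NonUnitalNormedRing A] [NormedSpace ℂ A] [IsScalarTower ℂ A A] [SMulCommClass ℂ A A] [CompleteSpace A] [NormedAddCommGroup B] [NormedSpace ℂ B] [CompleteSpace B]
    (πr : B →L[ℂ] A →L[ℂ] B)
    (hmod : ∀ (b : B) (a₁ a₂ : A), πr (πr b a₁) a₂ = πr b (a₁ * a₂))
    (e'' : Dual ℂ (Dual ℂ A))
    (hmixr : ∀ a'' : Dual ℂ (Dual ℂ A), arensExt (ContinuousLinearMap.mul ℂ A) a'' e'' = a'')
    (hmixl : ∀ a'' : Dual ℂ (Dual ℂ A),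
      arensExt (ContinuousLinearMap.mul ℂ A).flip a'' e'' = a'')
    (N : Net A) (hN : IsBAI N)
    (hlim : ∀ a' : Dual ℂ A, Tendsto (fun i => a' (N.e i)) atTop (𝓝 (e'' a')))
    (hZ : ∀ b'' : Dual ℂ (Dual ℂ B), arensExt πr.flip e'' b'' = arensExt πr b'' e'') :
    (∀ b' : Dual ℂ B, ∃ (a : A) (x' : Dual ℂ B), b' = arensAdj πr.flip x' a) ↔
      (∀ b'' : Dual ℂ (Dual ℂ B), arensExt πr b'' e'' = b'') := by
  obtain ⟨C, hC⟩ := hN.1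
  have hNl := hN.2.1
  haveI : NeBot (atTop : Filter N.ι) :=
    atTop_neBot_iff.mpr ⟨inferInstance, inferInstance⟩
  have hC0 : 0 ≤ C := le_trans (norm_nonneg _) (hC (Classical.arbitrary N.ι))
  constructor
  · -- AB* = B*  →  e'' is a right unit for B**
    intro hfac b''
    ext b'
    obtain ⟨a, x', rfl⟩ := hfac b'
    have key : arensAdj (arensAdj πr) e'' (arensAdj πr.flip x' a) = arensAdj πr.flip x' a := by
      ext b
      have h1 : Tendsto (fun i => (arensAdj πr (arensAdj πr.flip x' a) b) (N.e i)) atTop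
          (𝓝 (e'' (arensAdj πr (arensAdj πr.flip x' a) b))) := hlim _
      have heq : ∀ i, (arensAdj πr (arensAdj πr.flip x' a) b) (N.e i)
          = x' (πr b (N.e i * a)) := by
        intro i
        show x' (πr (πr b (N.e i)) a) = x' (πr b (N.e i * a))
        rw [hmod]
      have h3 : Tendsto (fun i => x' (πr b (N.e i * a))) atTop (𝓝 (x' (πr b a))) :=
        ((x'.comp (πr b)).continuous.tendsto a).comp (hNl a)
      have h2 : Tendsto (fun i => (arensAdj πr (arensAdj πr.flip x' a) b) (N.e i)) atTop
          (𝓝 (x' (πr b a))) := h3.congr (fun i => (heq i).symm)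
      exact tendsto_nhds_unique h1 h2
    show b'' (arensAdj (arensAdj πr) e'' (arensAdj πr.flip x' a)) = b'' (arensAdj πr.flip x' a)
    rw [key]
  · -- e'' is a right unit for B**  →  AB* = B*
    intro hunit b'
    set ρ : A →L[ℂ] Dual ℂ B →L[ℂ] Dual ℂ B := (arensAdj πr.flip).flip with hρdef
    letI : SeminormedAddCommGroup (Dual ℂ B →L[ℂ] Dual ℂ B) := inferInstance
    letI : NormedSpace ℂ (Dual ℂ B →L[ℂ] Dual ℂ B) := inferInstance
    have hρ : ∀ (a c : A) (w : Dual ℂ B), ρ (a * c) w = ρ a (ρ c w) := by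
      intro a c w
      ext b
      show w (πr b (a * c)) = w (πr (πr b a) c)
      rw [hmod]
    -- weak convergence of eᵢ · w' to w'
    have hweak : ∀ (w' : Dual ℂ B) (f : Dual ℂ (Dual ℂ B)),
        Tendsto (fun i => f (ρ (N.e i) w')) atTop (𝓝 (f w')) := by
      intro w' f
      have h1 : Tendsto (fun i => (arensAdj (arensAdj πr.flip) f w') (N.e i)) atTop
          (𝓝 (e'' (arensAdj (arensAdj πr.flip) f w'))) := hlim _
      have h2 : e'' (arensAdj (arensAdj πr.flip) f w') = f w' := by
        have h3 : e'' (arensAdj (arensAdj πr.flip) f w') = arensExt πr.flip e'' f w' := rfl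
        rw [h3, hZ f, hunit f]
      rw [← h2]
      exact h1
    -- b' lies in the closure of A · b'
    have hmem : ∀ w' : Dual ℂ B, w' ∈ closure (Set.range fun a : A => ρ a w') := by
      intro w'
      by_contra hnot
      set S : Set (Dual ℂ B) := Set.range fun a : A => ρ a w' with hSdef
      have hconv : Convex ℝ (closure S) := by
        refine Convex.closure ?_
        rintro y1 ⟨a1, rfl⟩ y2 ⟨a2, rfl⟩ s u hs hu hsu
        exact ⟨s • a1 + u • a2, by
          simp [map_add, ContinuousLinearMap.map_smul_of_tower]⟩
      obtain ⟨f, u, hfS, hfw⟩ := geometric_hahn_banach_closed_point hconv isClosed_closure hnot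
      have h0u : (0:ℝ) < u := by
        have h1 : f (ρ 0 w') < u := hfS _ (subset_closure ⟨0, rfl⟩)
        rw [map_zero ρ] at h1
        simpa using h1
      have hfS0 : ∀ y ∈ S, f y = 0 := by
        intro y hy
        by_contra hfy
        have hmem2 : ∀ s : ℝ, s • y ∈ S := by
          intro s
          obtain ⟨a1, rfl⟩ := hy
          exact ⟨s • a1, by simp [ContinuousLinearMap.map_smul_of_tower]⟩
        have hlt : ∀ s : ℝ, s * f y < u := by
          intro s
          have := hfS (s • y) (subset_closure (hmem2 s))
          simpa [map_smul] using this
        have := hlt ((u+1) / f y)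
        rw [div_mul_cancel₀ _ hfy] at this
        linarith
      set g : Dual ℂ (Dual ℂ B) := StrongDual.extendRCLike f with hgdef
      have hgS : ∀ y ∈ S, g y = 0 := by
        intro y hy
        rw [hgdef, StrongDual.extendRCLike_apply]
        have h1 : f y = 0 := hfS0 y hy
        have h2 : f ((RCLike.I : ℂ) • y) = 0 := by
          refine hfS0 _ ?_
          obtain ⟨a1, rfl⟩ := hy
          exact ⟨(RCLike.I : ℂ) • a1, by simp [map_smul]⟩
        rw [h1, h2]
        simp
      have hzero : ∀ i, g (ρ (N.e i) w') = 0 := fun i => hgS _ ⟨N.e i, rfl⟩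
      have hg0 : g w' = 0 := by
        have h4 : Tendsto (fun i => g (ρ (N.e i) w')) atTop (𝓝 (g w')) := hweak w' g
        have h5 : Tendsto (fun i => g (ρ (N.e i) w')) atTop (𝓝 (0:ℂ)) := by
          rw [funext hzero]
          exact tendsto_const_nhds
        exact tendsto_nhds_unique h4 h5
      have hfw0 : f w' = 0 := by
        rw [hgdef, StrongDual.extendRCLike_apply] at hg0
        have := congrArg Complex.re hg0
        simpa [RCLike.I, Complex.sub_re, Complex.ofReal_re, Complex.mul_re,
          Complex.I_re, Complex.I_im, Complex.ofReal_im] using this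
      linarith
    -- upgrade to norm convergence for b'
    have hnorm : Tendsto (fun i => ρ (N.e i) b') atTop (𝓝 b') := by
      rw [Metric.tendsto_nhds]
      intro ε hε
      have hden2 : 0 < ‖ρ‖ * C + 3 := by nlinarith [mul_nonneg (norm_nonneg ρ) hC0]
      set δ : ℝ := ε / (‖ρ‖ * C + 3) with hδdef
      have hδ : 0 < δ := div_pos hε hden2
      obtain ⟨y, hyS, hyd⟩ := Metric.mem_closure_iff.mp (hmem b') δ hδ
      obtain ⟨a, rfl⟩ := hyS
      have hcv : Tendsto (fun i => ρ (N.e i * a) b') atTop (𝓝 (ρ a b')) :=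
        (((ρ.flip b').continuous.tendsto a).comp (hNl a))
      have hev : ∀ᶠ i in atTop, dist (ρ (N.e i * a) b') (ρ a b') < δ :=
        (Metric.tendsto_nhds.mp hcv) δ hδ
      filter_upwards [hev] with i hi
      have hd1 : ‖b' - ρ a b'‖ < δ := by
        rw [← dist_eq_norm]; exact hyd
      have e1 : ρ (N.e i) b' - b'
          = ρ (N.e i) (b' - ρ a b') + (ρ (N.e i * a) b' - ρ a b') + (ρ a b' - b') := by
        rw [hρ]
        simp only [map_sub]
        abel
      have b1 : ‖ρ (N.e i) (b' - ρ a b')‖ ≤ ‖ρ‖ * C * δ := by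
        calc ‖ρ (N.e i) (b' - ρ a b')‖ ≤ ‖ρ (N.e i)‖ * ‖b' - ρ a b'‖ := le_opNorm _ _
          _ ≤ (‖ρ‖ * C) * δ := by
              refine mul_le_mul ?_ hd1.le (norm_nonneg _)
                (mul_nonneg ρ.opNorm_nonneg hC0)
              calc ‖ρ (N.e i)‖ ≤ ‖ρ‖ * ‖N.e i‖ := le_opNorm _ _
                _ ≤ ‖ρ‖ * C := mul_le_mul_of_nonneg_left (hC i) (ρ.opNorm_nonneg)
      have b2 : ‖ρ (N.e i * a) b' - ρ a b'‖ < δ := by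
        rw [← dist_eq_norm]; exact hi
      have b3 : ‖ρ a b' - b'‖ < δ := by
        rw [norm_sub_rev]; exact hd1
      have hsum : ‖ρ (N.e i) b' - b'‖ < (‖ρ‖ * C + 2) * δ := by
        calc ‖ρ (N.e i) b' - b'‖
            ≤ ‖ρ (N.e i) (b' - ρ a b')‖ + ‖ρ (N.e i * a) b' - ρ a b'‖ + ‖ρ a b' - b'‖ := by
              rw [e1]
              exact le_trans (norm_add_le _ _) (by gcongr; exact norm_add_le _ _)
          _ < ‖ρ‖ * C * δ + δ + δ := by
              have := b1; nlinarith [b2, b3]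
          _ = (‖ρ‖ * C + 2) * δ := by ring
      rw [dist_eq_norm]
      calc ‖ρ (N.e i) b' - b'‖ < (‖ρ‖ * C + 2) * δ := hsum
        _ < (‖ρ‖ * C + 3) * δ := by
            have := mul_lt_mul_of_pos_right (by linarith : ‖ρ‖ * C + 2 < ‖ρ‖ * C + 3) hδ
            exact this
        _ = ε := by
            rw [hδdef]
            field_simp
    obtain ⟨a, y, hay⟩ := cohen_factorization_s15 ρ hρ N.e C hC hNl b' hnorm
    exact ⟨a, y, by rw [hay, hρdef]; rfl⟩
end
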